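/- arXiv:2410.09440 — 2 statements merged into one kernel-verified Lean document; each statement's English description precedes it below -/
import Mathlib

section
/- For all natural numbers M ≥ 2, K ≥ 1, L ≥ 1, the number of unordered pairs of distinct vertices of the spider graph Sp(M,K,L) at graph distance exactly L + 1 equals M·K(K−1)/2·L + KM(M − 1) + M·K²(M−1)/2·(L − 1). -/
/-- Vertices of the spider graph `Sp(M,K,L)`: `M` core vertices plus
leg vertices `v_{m,k,ℓ}` for `m < M`, `k < K`, `ℓ < L`. -/
abbrev SpiderVertex (M K L : ℕ) := Fin M ⊕ (Fin M × Fin K × Fin L)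

/-- Base relation generating the edges of the spider graph. -/
def spiderRel (M K L : ℕ) : SpiderVertex M K L → SpiderVertex M K L → Prop
  | Sum.inl _, Sum.inl _ => True
  | Sum.inl m, Sum.inr (m', _, l) => m = m' ∧ (l : ℕ) = 0
  | Sum.inr _, Sum.inl _ => False
  | Sum.inr (m, k, l), Sum.inr (m', k', l') =>
      m = m' ∧ k = k' ∧ (l : ℕ) + 1 = (l' : ℕ)

/-- The spider graph `Sp(M,K,L)`. -/
def spiderGraph (M K L : ℕ) : SimpleGraph (SpiderVertex M K L) :=
  SimpleGraph.fromRel (spiderRel M K L)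

instance (M K L : ℕ) : DecidableRel (spiderRel M K L) := fun x y =>
  match x, y with
  | Sum.inl _, Sum.inl _ => inferInstanceAs (Decidable True)
  | Sum.inl m, Sum.inr (m', _, l) => inferInstanceAs (Decidable (m = m' ∧ (l : ℕ) = 0))
  | Sum.inr _, Sum.inl _ => inferInstanceAs (Decidable False)
  | Sum.inr (m, k, l), Sum.inr (m', k', l') =>
      inferInstanceAs (Decidable (m = m' ∧ k = k' ∧ (l : ℕ) + 1 = (l' : ℕ)))

instance (M K L : ℕ) : DecidableRel (spiderGraph M K L).Adj := fun x y =>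
  inferInstanceAs (Decidable (x ≠ y ∧ (spiderRel M K L x y ∨ spiderRel M K L y x)))

/-- `alphaSpider M K L j` is the number of unordered pairs of distinct vertices of
`Sp(M,K,L)` at graph distance exactly `j`. -/
noncomputable def alphaSpider (M K L j : ℕ) : ℕ :=
  Nat.card {p : Sym2 (SpiderVertex M K L) //
    ¬ p.IsDiag ∧ ∀ u v : SpiderVertex M K L, p = s(u, v) →
      (spiderGraph M K L).dist u v = j}

/-- explicit distance function -/
def dd (M K L : ℕ) : SpiderVertex M K L → SpiderVertex M K L → ℕ
  | Sum.inl m, Sum.inl m' => if m = m' then 0 else 1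
  | Sum.inl m, Sum.inr (m', _, l) => (if m = m' then 1 else 2) + l
  | Sum.inr (m, _, l), Sum.inl m' => (if m = m' then 1 else 2) + l
  | Sum.inr (m, k, l), Sum.inr (m', k', l') =>
      if m = m' then (if k = k' then Nat.dist l l' else (l : ℕ) + l' + 2)
      else (l : ℕ) + l' + 3

variable {M K L : ℕ}

lemma dd_self (u : SpiderVertex M K L) : dd M K L u u = 0 := by
  rcases u with m | ⟨m, k, l⟩ <;> simp [dd, Nat.dist]

lemma dd_comm (u v : SpiderVertex M K L) : dd M K L u v = dd M K L v u := by
  rcases u with m | ⟨m, k, l⟩ <;> rcases v with m' | ⟨m', k', l'⟩ <;>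
    simp [dd, Nat.dist, eq_comm] <;> split_ifs <;> omega

lemma dd_step {u v : SpiderVertex M K L} (h : (spiderGraph M K L).Adj u v)
    (w : SpiderVertex M K L) : dd M K L w v ≤ dd M K L w u + 1 := by
  rw [spiderGraph, SimpleGraph.fromRel_adj] at h
  obtain ⟨hne, h | h⟩ := h <;>
  · rcases u with m | ⟨m, k, l⟩ <;> rcases v with m' | ⟨m', k', l'⟩ <;>
      simp only [spiderRel] at h <;>
      rcases w with c | ⟨c, k2, l2⟩ <;>
      simp only [dd, Nat.dist] <;>
      first
        | (obtain ⟨h1, h2⟩ := h; subst h1; split_ifs <;> omega)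
        | (obtain ⟨h1, h2, h3⟩ := h; subst h1; subst h2; split_ifs <;> omega)
        | (split_ifs <;> omega)
        | (exact h.elim)

lemma spider_adj_down (m : Fin M) (k : Fin K) (a : ℕ) (h : a + 1 < L) :
    (spiderGraph M K L).Adj (Sum.inr (m, k, ⟨a + 1, h⟩)) (Sum.inr (m, k, ⟨a, by omega⟩)) := by
  rw [spiderGraph, SimpleGraph.fromRel_adj]
  refine ⟨by simp [Fin.ext_iff], Or.inr ?_⟩
  simp [spiderRel]

lemma spider_adj_core (m : Fin M) (k : Fin K) (h : 0 < L) :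
    (spiderGraph M K L).Adj (Sum.inr (m, k, ⟨0, h⟩)) (Sum.inl m) := by
  rw [spiderGraph, SimpleGraph.fromRel_adj]
  exact ⟨by simp, Or.inr (by simp [spiderRel])⟩

lemma spider_adj_cores {m m' : Fin M} (h : m ≠ m') :
    (spiderGraph M K L).Adj (Sum.inl m) (Sum.inl m') := by
  rw [spiderGraph, SimpleGraph.fromRel_adj]
  exact ⟨by simpa using h, Or.inl trivial⟩

lemma vr_eq (m : Fin M) (k : Fin K) {a b : ℕ} (ha : a < L) (hb : b < L) (h : a = b) :
    (Sum.inr (m, k, ⟨a, ha⟩) : SpiderVertex M K L) = Sum.inr (m, k, ⟨b, hb⟩) := by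
  subst h; rfl

/-- walk down a leg from level a+j to level a -/
def legWalk (m : Fin M) (k : Fin K) (a : ℕ) :
    (j : ℕ) → (h : a + j < L) →
      (spiderGraph M K L).Walk (Sum.inr (m, k, ⟨a + j, h⟩)) (Sum.inr (m, k, ⟨a, by omega⟩))
  | 0, _ => SimpleGraph.Walk.nil
  | j + 1, h => SimpleGraph.Walk.cons (spider_adj_down m k (a + j) (by omega))
      (legWalk m k a j (by omega))

lemma legWalk_length (m : Fin M) (k : Fin K) (a j : ℕ) (h : a + j < L) :
    (legWalk m k a j h).length = j := by
  induction j with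
  | zero => rfl
  | succ j ih => simp [legWalk, ih]
/-- walk from v_{m,k,l} to the core c_m, length l+1 -/
def toCoreWalk (m : Fin M) (k : Fin K) (l : Fin L) :
    (spiderGraph M K L).Walk (Sum.inr (m, k, l)) (Sum.inl m) :=
  ((legWalk m k 0 l (by omega)).copy (vr_eq m k _ _ (by omega)) rfl).append
    (SimpleGraph.Walk.cons (spider_adj_core m k (Nat.lt_of_le_of_lt (Nat.zero_le _) l.isLt)) SimpleGraph.Walk.nil)

lemma toCoreWalk_length (m : Fin M) (k : Fin K) (l : Fin L) :
    (toCoreWalk m k l).length = (l : ℕ) + 1 := by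
  simp [toCoreWalk, legWalk_length]

lemma dist_le_dd (u v : SpiderVertex M K L) :
    (spiderGraph M K L).dist u v ≤ dd M K L u v := by
  rcases u with m | ⟨m, k, l⟩ <;> rcases v with m' | ⟨m', k', l'⟩
  · by_cases h : m = m'
    · subst h; simp [dd, SimpleGraph.dist_self]
    · refine le_trans (SimpleGraph.dist_le
        (SimpleGraph.Walk.cons (spider_adj_cores h) SimpleGraph.Walk.nil)) ?_
      simp [dd, h]
  · by_cases h : m = m'
    · subst h
      refine le_trans (SimpleGraph.dist_le (toCoreWalk m k' l').reverse) ?_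
      simp [toCoreWalk_length, dd]
    · refine le_trans (SimpleGraph.dist_le ((SimpleGraph.Walk.cons (spider_adj_cores h)
        SimpleGraph.Walk.nil).append (toCoreWalk m' k' l').reverse)) ?_
      simp [toCoreWalk_length, dd, h]
      omega
  · by_cases h : m = m'
    · subst h
      refine le_trans (SimpleGraph.dist_le (toCoreWalk m k l)) ?_
      simp [toCoreWalk_length, dd]
    · refine le_trans (SimpleGraph.dist_le ((toCoreWalk m k l).append
        (SimpleGraph.Walk.cons (spider_adj_cores h) SimpleGraph.Walk.nil))) ?_
      simp [toCoreWalk_length, dd, h]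
      omega
  · by_cases h : m = m'
    · subst h
      by_cases hk : k = k'
      · subst hk
        rcases le_total (l : ℕ) (l' : ℕ) with hle | hle
        · refine le_trans (SimpleGraph.dist_le
            (((legWalk m k l ((l' : ℕ) - l) (by omega)).copy
              (vr_eq m k _ _ (by omega)) rfl).reverse)) ?_
          simp [legWalk_length, dd, Nat.dist]
          try omega
        · refine le_trans (SimpleGraph.dist_le
            ((legWalk m k l' ((l : ℕ) - l') (by omega)).copy
              (vr_eq m k _ _ (by omega)) rfl)) ?_
          simp [legWalk_length, dd, Nat.dist]
          try omega
      · refine le_trans (SimpleGraph.dist_le ((toCoreWalk m k l).append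
            (toCoreWalk m k' l').reverse)) ?_
        simp [toCoreWalk_length, dd, hk]
        omega
    · refine le_trans (SimpleGraph.dist_le ((toCoreWalk m k l).append
          ((SimpleGraph.Walk.cons (spider_adj_cores h) SimpleGraph.Walk.nil).append
            (toCoreWalk m' k' l').reverse))) ?_
      simp [toCoreWalk_length, dd, h]
      omega

lemma dd_le_walk {u v : SpiderVertex M K L} (p : (spiderGraph M K L).Walk u v) :
    dd M K L u v ≤ p.length := by
  induction p with
  | nil => simp [dd_self]
  | @cons a x b h p ih =>
    have h2 : dd M K L b a ≤ dd M K L b x + 1 := dd_step h.symm b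
    have h3 : dd M K L x b = dd M K L b x := dd_comm x b
    have h4 : dd M K L a b = dd M K L b a := dd_comm a b
    simp only [SimpleGraph.Walk.length_cons]
    omega

lemma spider_reachable (u v : SpiderVertex M K L) : (spiderGraph M K L).Reachable u v := by
  have key : ∀ w : SpiderVertex M K L, ∃ m : Fin M, (spiderGraph M K L).Reachable w (Sum.inl m) := by
    intro w
    rcases w with m | ⟨m, k, l⟩
    · exact ⟨m, SimpleGraph.Reachable.refl _⟩
    · exact ⟨m, ⟨toCoreWalk m k l⟩⟩
  obtain ⟨a, ha⟩ := key u
  obtain ⟨b, hb⟩ := key v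
  refine ha.trans (SimpleGraph.Reachable.trans ?_ hb.symm)
  by_cases h : a = b
  · subst h; rfl
  · exact ⟨SimpleGraph.Walk.cons (spider_adj_cores h) SimpleGraph.Walk.nil⟩

lemma spider_dist (u v : SpiderVertex M K L) :
    (spiderGraph M K L).dist u v = dd M K L u v := by
  refine le_antisymm (dist_le_dd u v) ?_
  obtain ⟨p, hp⟩ := (spider_reachable u v).exists_walk_length_eq_dist
  rw [← hp]; exact dd_le_walk p

lemma alpha_eq_card (j : ℕ) :
    alphaSpider M K L j = (Finset.univ.filter
      (fun p : Sym2 (SpiderVertex M K L) => ¬ p.IsDiag ∧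
        Sym2.lift ⟨dd M K L, fun a b => dd_comm a b⟩ p = j)).card := by
  classical
  rw [alphaSpider, Nat.card_eq_fintype_card, Fintype.card_subtype]
  congr 1
  apply Finset.filter_congr
  intro p _
  induction p using Sym2.ind with
  | _ u v =>
    simp only [Sym2.lift_mk, Sym2.mk_isDiag_iff]
    constructor
    · rintro ⟨h1, h2⟩
      exact ⟨h1, by rw [← spider_dist]; exact h2 u v rfl⟩
    · rintro ⟨h1, h2⟩
      refine ⟨h1, ?_⟩
      intro a b hab
      rw [Sym2.eq_iff] at hab
      rcases hab with ⟨rfl, rfl⟩ | ⟨rfl, rfl⟩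
      · rw [spider_dist]; exact h2
      · rw [spider_dist, dd_comm]; exact h2

lemma two_mul_card (j : ℕ) :
    (Finset.univ.filter (fun z : SpiderVertex M K L × SpiderVertex M K L =>
        z.1 ≠ z.2 ∧ dd M K L z.1 z.2 = j)).card =
    2 * (Finset.univ.filter
      (fun p : Sym2 (SpiderVertex M K L) => ¬ p.IsDiag ∧
        Sym2.lift ⟨dd M K L, fun a b => dd_comm a b⟩ p = j)).card := by
  classical
  rw [Finset.card_eq_sum_card_fiberwise
    (f := fun z : SpiderVertex M K L × SpiderVertex M K L => s(z.1, z.2))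
    (t := Finset.univ.filter
      (fun p : Sym2 (SpiderVertex M K L) => ¬ p.IsDiag ∧
        Sym2.lift ⟨dd M K L, fun a b => dd_comm a b⟩ p = j))]
  · rw [Finset.sum_congr rfl (g := fun _ => 2), Finset.sum_const, smul_eq_mul, mul_comm]
    intro p hp
    simp only [Finset.mem_filter, Finset.mem_univ, true_and] at hp
    induction p using Sym2.ind with
    | _ u v =>
      obtain ⟨h1, h2⟩ := hp
      rw [Sym2.mk_isDiag_iff] at h1
      rw [Sym2.lift_mk] at h2
      have : (Finset.univ.filter (fun z : SpiderVertex M K L × SpiderVertex M K L =>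
          z.1 ≠ z.2 ∧ dd M K L z.1 z.2 = j)).filter (fun z => s(z.1, z.2) = s(u, v)) =
          {(u, v), (v, u)} := by
        ext ⟨a, b⟩
        simp only [Finset.mem_filter, Finset.mem_univ, true_and, Finset.mem_insert,
          Finset.mem_singleton, Prod.mk.injEq, Prod.ext_iff]
        constructor
        · rintro ⟨-, hab⟩
          rw [show s((a, b).1, (a, b).2) = s(a, b) from rfl, Sym2.eq_iff] at hab
          tauto
        · rintro (⟨rfl, rfl⟩ | ⟨rfl, rfl⟩)
          · exact ⟨⟨h1, h2⟩, rfl⟩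
          · exact ⟨⟨fun hh => h1 hh.symm, by rw [dd_comm]; exact h2⟩, Sym2.eq_swap⟩
      rw [this]
      rw [Finset.card_insert_of_notMem (by simp [Prod.ext_iff]; intro h _; exact h1 h),
        Finset.card_singleton]
  · intro z hz
    simp only [Finset.mem_coe, Finset.mem_filter, Finset.mem_univ, true_and] at hz ⊢
    obtain ⟨h1, h2⟩ := hz
    obtain ⟨a, b⟩ := z
    exact ⟨by simpa [Sym2.mk_isDiag_iff] using h1, by simpa [Sym2.lift_mk] using h2⟩

lemma sumL_eq (n : ℕ) (hn : n < L) :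
    (∑ l : Fin L, if (l : ℕ) = n then 1 else 0) = 1 := by
  rw [Fin.sum_univ_eq_sum_range (fun i => if i = n then 1 else 0)]
  simp [Finset.sum_ite_eq', hn]

lemma sumL_le2 : (∑ l : Fin L, if (l : ℕ) + 2 ≤ L then 1 else 0) = L - 1 := by
  rw [Fin.sum_univ_eq_sum_range (fun i => if i + 2 ≤ L then 1 else 0)]
  rcases L with _ | n
  · simp
  · rw [Finset.sum_range_succ, if_neg (by omega)]
    rw [Finset.sum_congr rfl (g := fun _ => 1), Finset.sum_const, smul_eq_mul, mul_one]
    · simp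
    · intro i hi
      rw [Finset.mem_range] at hi
      rw [if_pos (by omega)]

lemma sum_ite_ne {α : Type*} [Fintype α] [DecidableEq α] (a : α) (c : ℕ) :
    ∑ b : α, (if a = b then 0 else c) = (Fintype.card α - 1) * c := by
  rw [Finset.sum_ite, Finset.sum_const, Finset.sum_const]
  have h1 : Finset.univ.filter (fun b => a = b) = {a} := by
    ext b; simp [eq_comm]
  have h2 : Finset.univ.filter (fun b => ¬ a = b) = Finset.univ.erase a := by
    ext b; simp [eq_comm (a := a)]
  rw [h1, h2, Finset.card_erase_of_mem (Finset.mem_univ a)]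
  simp [Finset.card_univ]

lemma blockCC (hL : 1 ≤ L) : (∑ a : Fin M, ∑ b : Fin M,
    if (Sum.inl a : SpiderVertex M K L) ≠ Sum.inl b ∧
        dd M K L (Sum.inl a) (Sum.inl b) = L + 1 then 1 else 0) = 0 := by
  refine Finset.sum_eq_zero fun a _ => Finset.sum_eq_zero fun b _ => ?_
  rw [if_neg]
  rintro ⟨h1, h2⟩
  simp only [dd] at h2
  split_ifs at h2 <;> omega

lemma keyCL (hL : 1 ≤ L) (a b : Fin M) (k : Fin K) :
    (∑ l : Fin L, if (Sum.inl a : SpiderVertex M K L) ≠ Sum.inr (b, k, l) ∧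
        dd M K L (Sum.inl a) (Sum.inr (b, k, l)) = L + 1 then 1 else 0) =
      if a = b then 0 else 1 := by
  by_cases h : a = b
  · subst h
    rw [if_pos rfl]
    refine Finset.sum_eq_zero fun l _ => ?_
    rw [if_neg]
    rintro ⟨-, h2⟩
    simp [dd] at h2
    omega
  · rw [if_neg h]
    have e : ∀ l : Fin L, ((Sum.inl a : SpiderVertex M K L) ≠ Sum.inr (b, k, l) ∧
        dd M K L (Sum.inl a) (Sum.inr (b, k, l)) = L + 1) ↔ ((l : ℕ) = L - 1) := by
      intro l
      simp only [dd, if_neg h, ne_eq, reduceCtorEq, not_false_eq_true, true_and]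
      omega
    simp only [e]
    exact sumL_eq (L - 1) (by omega)

lemma keyLC (hL : 1 ≤ L) (a b : Fin M) (k : Fin K) :
    (∑ l : Fin L, if (Sum.inr (b, k, l) : SpiderVertex M K L) ≠ Sum.inl a ∧
        dd M K L (Sum.inr (b, k, l)) (Sum.inl a) = L + 1 then 1 else 0) =
      if b = a then 0 else 1 := by
  by_cases h : b = a
  · subst h
    rw [if_pos rfl]
    refine Finset.sum_eq_zero fun l _ => ?_
    rw [if_neg]
    rintro ⟨-, h2⟩
    simp [dd] at h2
    omega
  · rw [if_neg h]
    have e : ∀ l : Fin L, ((Sum.inr (b, k, l) : SpiderVertex M K L) ≠ Sum.inl a ∧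
        dd M K L (Sum.inr (b, k, l)) (Sum.inl a) = L + 1) ↔ ((l : ℕ) = L - 1) := by
      intro l
      simp only [dd, if_neg h, ne_eq, reduceCtorEq, not_false_eq_true, true_and]
      omega
    simp only [e]
    exact sumL_eq (L - 1) (by omega)

lemma sum_ite_full {α : Type*} [Fintype α] [DecidableEq α] (a : α) (X Y : ℕ) :
    ∑ b : α, (if a = b then X else Y) = X + (Fintype.card α - 1) * Y := by
  rw [Finset.sum_ite, Finset.sum_const, Finset.sum_const]
  have h1 : Finset.univ.filter (fun b => a = b) = {a} := by
    ext b; simp [eq_comm]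
  have h2 : Finset.univ.filter (fun b => ¬ a = b) = Finset.univ.erase a := by
    ext b; simp [eq_comm (a := a)]
  rw [h1, h2, Finset.card_erase_of_mem (Finset.mem_univ a)]
  simp [Finset.card_univ]

lemma keyLL (a b : Fin M) (k k' : Fin K) (l : Fin L) :
    (∑ l' : Fin L, if (Sum.inr (a, k, l) : SpiderVertex M K L) ≠ Sum.inr (b, k', l') ∧
        dd M K L (Sum.inr (a, k, l)) (Sum.inr (b, k', l')) = L + 1 then 1 else 0) =
      if a = b then (if k = k' then 0 else 1)
      else (if (l : ℕ) + 2 ≤ L then 1 else 0) := by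
  by_cases h : a = b
  · subst h
    rw [if_pos rfl]
    by_cases hk : k = k'
    · subst hk
      rw [if_pos rfl]
      refine Finset.sum_eq_zero fun l' _ => ?_
      rw [if_neg]
      rintro ⟨-, h2⟩
      simp [dd, Nat.dist] at h2
      omega
    · rw [if_neg hk]
      have e : ∀ l' : Fin L, ((Sum.inr (a, k, l) : SpiderVertex M K L) ≠ Sum.inr (a, k', l') ∧
          dd M K L (Sum.inr (a, k, l)) (Sum.inr (a, k', l')) = L + 1) ↔
            ((l' : ℕ) = L - 1 - (l : ℕ)) := by
        intro l'
        simp [dd, hk]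
        omega
      simp only [e]
      exact sumL_eq _ (by omega)
  · rw [if_neg h]
    by_cases hl : (l : ℕ) + 2 ≤ L
    · rw [if_pos hl]
      have e : ∀ l' : Fin L, ((Sum.inr (a, k, l) : SpiderVertex M K L) ≠ Sum.inr (b, k', l') ∧
          dd M K L (Sum.inr (a, k, l)) (Sum.inr (b, k', l')) = L + 1) ↔
            ((l' : ℕ) = L - 2 - (l : ℕ)) := by
        intro l'
        simp [dd, h, Fin.ext_iff]
        omega
      simp only [e]
      exact sumL_eq _ (by omega)
    · rw [if_neg hl]
      refine Finset.sum_eq_zero fun l' _ => ?_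
      rw [if_neg]
      rintro ⟨-, h2⟩
      simp [dd, h] at h2
      omega

lemma blockLL (hK : 1 ≤ K) :
    (∑ x : Fin M × Fin K × Fin L, ∑ y : Fin M × Fin K × Fin L,
      if (Sum.inr x : SpiderVertex M K L) ≠ Sum.inr y ∧
          dd M K L (Sum.inr x) (Sum.inr y) = L + 1 then 1 else 0) =
      M * (K * (L * (K - 1) + (M - 1) * (K * (L - 1)))) := by
  simp only [Fintype.sum_prod_type]
  have step2 : ∀ (a : Fin M) (k : Fin K) (l : Fin L),
      (∑ b : Fin M, ∑ k' : Fin K, ∑ l' : Fin L,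
        if (Sum.inr (a, k, l) : SpiderVertex M K L) ≠ Sum.inr (b, k', l') ∧
            dd M K L (Sum.inr (a, k, l)) (Sum.inr (b, k', l')) = L + 1 then 1 else 0) =
      (K - 1) + (M - 1) * (K * (if (l : ℕ) + 2 ≤ L then 1 else 0)) := by
    intro a k l
    have e1 : ∀ b : Fin M, (∑ k' : Fin K, ∑ l' : Fin L,
        if (Sum.inr (a, k, l) : SpiderVertex M K L) ≠ Sum.inr (b, k', l') ∧
            dd M K L (Sum.inr (a, k, l)) (Sum.inr (b, k', l')) = L + 1 then 1 else 0) =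
        if a = b then (K - 1) else K * (if (l : ℕ) + 2 ≤ L then 1 else 0) := by
      intro b
      rw [Finset.sum_congr rfl (fun k' _ => keyLL a b k k' l)]
      by_cases h : a = b
      · rw [if_pos h]
        simp only [if_pos h]
        rw [sum_ite_full k 0 1]
        simp
      · rw [if_neg h]
        simp only [if_neg h]
        rw [Finset.sum_const, Finset.card_univ, Fintype.card_fin, smul_eq_mul]
    rw [Finset.sum_congr rfl (fun b _ => e1 b), sum_ite_full a (K - 1)
      (K * (if (l : ℕ) + 2 ≤ L then 1 else 0))]
    simp
  have step3 : ∀ (a : Fin M) (k : Fin K),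
      (∑ l : Fin L, ((K - 1) + (M - 1) * (K * (if (l : ℕ) + 2 ≤ L then 1 else 0)))) =
      L * (K - 1) + (M - 1) * (K * (L - 1)) := by
    intro a k
    rw [Finset.sum_add_distrib, Finset.sum_const, Finset.card_univ, Fintype.card_fin,
      smul_eq_mul]
    congr 1
    rw [← Finset.mul_sum, ← Finset.mul_sum, sumL_le2]
  rw [Finset.sum_congr rfl (fun a _ => Finset.sum_congr rfl (fun k _ =>
    (Finset.sum_congr rfl (fun l _ => step2 a k l)).trans (step3 a k)))]
  simp [Finset.sum_const, Finset.card_univ, mul_assoc]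

lemma ordered_count (hM : 2 ≤ M) (hK : 1 ≤ K) (hL : 1 ≤ L) :
    (Finset.univ.filter (fun z : SpiderVertex M K L × SpiderVertex M K L =>
        z.1 ≠ z.2 ∧ dd M K L z.1 z.2 = L + 1)).card =
      2 * (M * ((M - 1) * K)) + M * (K * (L * (K - 1) + (M - 1) * (K * (L - 1)))) := by
  rw [Finset.card_filter]
  rw [Fintype.sum_prod_type]
  rw [Fintype.sum_sum_type]
  simp only [Fintype.sum_sum_type]
  have hCL : (∑ a : Fin M, ∑ x : Fin M × Fin K × Fin L,
      if (Sum.inl a : SpiderVertex M K L) ≠ Sum.inr x ∧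
          dd M K L (Sum.inl a) (Sum.inr x) = L + 1 then 1 else 0) = M * ((M - 1) * K) := by
    simp only [Fintype.sum_prod_type]
    have e1 : ∀ a b : Fin M, (∑ k : Fin K, ∑ l : Fin L,
        if (Sum.inl a : SpiderVertex M K L) ≠ Sum.inr (b, k, l) ∧
            dd M K L (Sum.inl a) (Sum.inr (b, k, l)) = L + 1 then 1 else 0) =
        if a = b then 0 else K := by
      intro a b
      rw [Finset.sum_congr rfl (fun k _ => keyCL hL a b k)]
      by_cases h : a = b
      · simp [h]
      · simp [h]
    have e2 : ∀ a : Fin M, (∑ b : Fin M, if a = b then 0 else K) = (M - 1) * K := by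
      intro a; rw [sum_ite_full a 0 K]; simp
    rw [Finset.sum_congr rfl (fun a _ => (Finset.sum_congr rfl (fun b _ => e1 a b)).trans
      (e2 a))]
    rw [Finset.sum_const, Finset.card_univ, Fintype.card_fin, smul_eq_mul]
  have hLC : (∑ x : Fin M × Fin K × Fin L, ∑ a : Fin M,
      if (Sum.inr x : SpiderVertex M K L) ≠ Sum.inl a ∧
          dd M K L (Sum.inr x) (Sum.inl a) = L + 1 then 1 else 0) = M * ((M - 1) * K) := by
    simp only [Fintype.sum_prod_type]
    have e1 : ∀ (b : Fin M) (k : Fin K) (l : Fin L), (∑ a : Fin M,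
        if (Sum.inr (b, k, l) : SpiderVertex M K L) ≠ Sum.inl a ∧
            dd M K L (Sum.inr (b, k, l)) (Sum.inl a) = L + 1 then 1 else 0) =
        if (l : ℕ) = L - 1 then M - 1 else 0 := by
      intro b k l
      by_cases hl : (l : ℕ) = L - 1
      · rw [if_pos hl]
        have e : ∀ a : Fin M, ((Sum.inr (b, k, l) : SpiderVertex M K L) ≠ Sum.inl a ∧
            dd M K L (Sum.inr (b, k, l)) (Sum.inl a) = L + 1) ↔ ¬ (b = a) := by
          intro a
          by_cases h : b = a <;> simp [dd, h] <;> omega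
        simp only [e]
        have e2 : (∑ a : Fin M, if ¬ b = a then (1:ℕ) else 0) =
            ∑ a : Fin M, if b = a then 0 else 1 :=
          Finset.sum_congr rfl (fun a _ => by by_cases h : b = a <;> simp [h])
        rw [e2, sum_ite_full b 0 1]
        simp
      · rw [if_neg hl]
        refine Finset.sum_eq_zero fun a _ => ?_
        rw [if_neg]
        rintro ⟨-, h2⟩
        simp only [dd] at h2
        split_ifs at h2 <;> omega
    have e3 : (∑ l : Fin L, if (l : ℕ) = L - 1 then M - 1 else 0) = M - 1 :=
      calc (∑ l : Fin L, if (l : ℕ) = L - 1 then M - 1 else 0)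
          = ∑ l : Fin L, (M - 1) * (if (l : ℕ) = L - 1 then 1 else 0) :=
            Finset.sum_congr rfl (fun l _ => by split_ifs <;> simp)
        _ = (M - 1) * ∑ l : Fin L, (if (l : ℕ) = L - 1 then 1 else 0) := by
            rw [Finset.mul_sum]
        _ = M - 1 := by rw [sumL_eq _ (by omega), mul_one]
    rw [Finset.sum_congr rfl (fun b _ => Finset.sum_congr rfl (fun k _ =>
      (Finset.sum_congr rfl (fun l _ => e1 b k l)).trans e3))]
    simp only [Finset.sum_const, Finset.card_univ, Fintype.card_fin, smul_eq_mul]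
    ring
  rw [Finset.sum_add_distrib, Finset.sum_add_distrib, blockCC hL, hCL, hLC, blockLL hK]
  ring

/-- For all `M ≥ 2`, `K ≥ 1`, `L ≥ 1`, the number of unordered pairs of
distinct vertices of `Sp(M,K,L)` at distance exactly `L + 1` equals
`M·K(K−1)/2·L + KM(M−1) + M·K²(M−1)/2·(L−1)`. -/
theorem spider_alpha_Lplus1 (M K L : ℕ) (hM : 2 ≤ M) (hK : 1 ≤ K) (hL : 1 ≤ L) :
    alphaSpider M K L (L + 1) =
      M * K * (K - 1) / 2 * L + K * M * (M - 1) + M * K ^ 2 * (M - 1) / 2 * (L - 1) := by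
  have hdvd1 : 2 ∣ K * (K - 1) := by
    rcases Nat.even_or_odd K with h | h
    · exact Dvd.dvd.mul_right h.two_dvd _
    · have h2 : Even (K - 1) := by
        obtain ⟨t, ht⟩ := h
        exact ⟨t, by omega⟩
      exact Dvd.dvd.mul_left h2.two_dvd _
  have hdvd2 : 2 ∣ M * (M - 1) := by
    rcases Nat.even_or_odd M with h | h
    · exact Dvd.dvd.mul_right h.two_dvd _
    · have h2 : Even (M - 1) := by
        obtain ⟨t, ht⟩ := h
        exact ⟨t, by omega⟩
      exact Dvd.dvd.mul_left h2.two_dvd _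
  have hdvd1' : 2 ∣ M * K * (K - 1) := by
    obtain ⟨c, hc⟩ := hdvd1
    exact ⟨M * c, by rw [mul_assoc, hc]; ring⟩
  have hdvd2' : 2 ∣ M * K ^ 2 * (M - 1) := by
    obtain ⟨c, hc⟩ := hdvd2
    refine ⟨K ^ 2 * c, ?_⟩
    rw [show M * K ^ 2 * (M - 1) = K ^ 2 * (M * (M - 1)) from by ring, hc]
    ring
  refine Nat.eq_of_mul_eq_mul_left (show 0 < 2 by norm_num) ?_
  rw [alpha_eq_card, ← two_mul_card, ordered_count hM hK hL]
  conv_rhs => rw [mul_add, mul_add]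
  rw [show 2 * (M * K * (K - 1) / 2 * L) = 2 * (M * K * (K - 1) / 2) * L from
    (mul_assoc _ _ _).symm, Nat.mul_div_cancel' hdvd1']
  rw [show 2 * (M * K ^ 2 * (M - 1) / 2 * (L - 1)) = 2 * (M * K ^ 2 * (M - 1) / 2) * (L - 1) from
    (mul_assoc _ _ _).symm, Nat.mul_div_cancel' hdvd2']
  ring
end

section
/- For all natural numbers M ≥ 2, K ≥ 1, L ≥ 1, the number of unordered pairs of distinct vertices of the spider graph Sp(M,K,L) at graph distance exactly 2L + 1 equals M·K²(M−1)/2, and for every j ≥ 2L + 2 there are no pairs of vertices at graph distance exactly j. -/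
namespace SpiderAux

variable {M K L : ℕ}

/-- Explicit distance function. -/
def D : SpiderVertex M K L → SpiderVertex M K L → ℕ
  | Sum.inl m, Sum.inl m' => if m = m' then 0 else 1
  | Sum.inl m, Sum.inr (m', _, l) => (l : ℕ) + 1 + (if m = m' then 0 else 1)
  | Sum.inr (m, _, l), Sum.inl m' => (l : ℕ) + 1 + (if m' = m then 0 else 1)
  | Sum.inr (m, k, l), Sum.inr (m', k', l') =>
      if m = m' then (if k = k' then Nat.dist l l' else (l : ℕ) + (l' : ℕ) + 2)
      else (l : ℕ) + (l' : ℕ) + 3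

lemma adj_ll {m m' : Fin M} :
    (spiderGraph M K L).Adj (Sum.inl m) (Sum.inl m') ↔ m ≠ m' := by
  constructor
  · rintro ⟨h, -⟩ rfl; exact h rfl
  · intro h; exact ⟨by simpa using h, Or.inl trivial⟩

lemma adj_lr {m m' : Fin M} {k : Fin K} {l : Fin L} :
    (spiderGraph M K L).Adj (Sum.inl m) (Sum.inr (m', k, l)) ↔ m = m' ∧ (l : ℕ) = 0 := by
  constructor
  · rintro ⟨-, h | h⟩
    · exact h
    · exact h.elim
  · rintro ⟨rfl, h⟩; exact ⟨by simp, Or.inl ⟨rfl, h⟩⟩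

lemma adj_rr {m m' : Fin M} {k k' : Fin K} {l l' : Fin L} :
    (spiderGraph M K L).Adj (Sum.inr (m, k, l)) (Sum.inr (m', k', l')) ↔
      m = m' ∧ k = k' ∧ ((l : ℕ) + 1 = (l' : ℕ) ∨ (l' : ℕ) + 1 = (l : ℕ)) := by
  constructor
  · rintro ⟨hne, ⟨rfl, rfl, h⟩ | ⟨rfl, rfl, h⟩⟩
    · exact ⟨rfl, rfl, Or.inl h⟩
    · exact ⟨rfl, rfl, Or.inr h⟩
  · rintro ⟨rfl, rfl, h | h⟩
    · refine ⟨?_, Or.inl ⟨rfl, rfl, h⟩⟩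
      simp only [ne_eq, Sum.inr.injEq, Prod.mk.injEq, true_and]
      rintro rfl; omega
    · refine ⟨?_, Or.inr ⟨rfl, rfl, h⟩⟩
      simp only [ne_eq, Sum.inr.injEq, Prod.mk.injEq, true_and]
      rintro rfl; omega

lemma D_self (u : SpiderVertex M K L) : D u u = 0 := by
  rcases u with m | ⟨m, k, l⟩ <;> simp [D, Nat.dist_self]

lemma D_comm (u v : SpiderVertex M K L) : D u v = D v u := by
  rcases u with m | ⟨m, k, l⟩ <;> rcases v with m' | ⟨m', k', l'⟩ <;>
    simp only [D] <;> split_ifs with h1 h2 h3 <;>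
    first
    | rfl
    | omega
    | (exact Nat.dist_comm _ _)
    | (exact absurd h1.symm (by assumption))
    | (exact absurd h2.symm (by assumption))
    | (simp_all)

end SpiderAux

namespace SpiderAux

variable {M K L : ℕ}

lemma D_lipschitz {u x : SpiderVertex M K L} (h : (spiderGraph M K L).Adj u x)
    (v : SpiderVertex M K L) : D u v ≤ D x v + 1 := by
  rcases u with m | ⟨m, k, l⟩ <;> rcases x with m2 | ⟨m2, k2, l2⟩
  · rw [adj_ll] at h
    rcases v with m' | ⟨m', k', l'⟩ <;> simp only [D] <;> split_ifs <;> omega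
  · rw [adj_lr] at h
    obtain ⟨rfl, hl⟩ := h
    rcases v with m' | ⟨m', k', l'⟩ <;> simp only [D] <;> split_ifs <;>
      simp [Nat.dist] <;> omega
  · rw [(spiderGraph M K L).adj_comm, adj_lr] at h
    obtain ⟨rfl, hl⟩ := h
    rcases v with m' | ⟨m', k', l'⟩ <;> simp only [D] <;> split_ifs <;>
      simp [Nat.dist] <;> omega
  · rw [adj_rr] at h
    obtain ⟨rfl, rfl, hl⟩ := h
    rcases v with m' | ⟨m', k', l'⟩ <;> simp only [D] <;> split_ifs <;>
      simp [Nat.dist] <;> omega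

end SpiderAux

namespace SpiderAux

variable {M K L : ℕ}

open SimpleGraph

lemma adj_rl {m m' : Fin M} {k : Fin K} {l : Fin L} :
    (spiderGraph M K L).Adj (Sum.inr (m', k, l)) (Sum.inl m) ↔ m = m' ∧ (l : ℕ) = 0 := by
  rw [(spiderGraph M K L).adj_comm, adj_lr]

/-- Walk from a leg vertex down to its core. -/
def legWalk (m : Fin M) (k : Fin K) : (n : ℕ) → (hn : n < L) →
    (spiderGraph M K L).Walk (Sum.inr (m, k, ⟨n, hn⟩)) (Sum.inl m)
  | 0, hn => (adj_rl.mpr ⟨rfl, rfl⟩).toWalk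
  | n+1, hn => SimpleGraph.Walk.cons
      (adj_rr.mpr ⟨rfl, rfl, Or.inr rfl⟩)
      (legWalk m k n (Nat.lt_of_succ_lt hn))

lemma legWalk_length (m : Fin M) (k : Fin K) : ∀ (n : ℕ) (hn : n < L),
    (legWalk m k n hn).length = n + 1
  | 0, hn => rfl
  | n+1, hn => by
      simp only [legWalk, SimpleGraph.Walk.length_cons, legWalk_length m k n]

lemma reach_leg_core (m : Fin M) (k : Fin K) (l : Fin L) :
    (spiderGraph M K L).Reachable (Sum.inr (m, k, l)) (Sum.inl m) :=
  ⟨legWalk m k l.1 l.2⟩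

lemma reach_core (m m' : Fin M) :
    (spiderGraph M K L).Reachable (Sum.inl m) (Sum.inl m' : SpiderVertex M K L) := by
  by_cases h : m = m'
  · exact h ▸ Reachable.refl _
  · exact (adj_ll.mpr h).reachable

lemma spider_connected (hM : 1 ≤ M) : (spiderGraph M K L).Connected := by
  have : Nonempty (SpiderVertex M K L) := ⟨Sum.inl ⟨0, hM⟩⟩
  refine ⟨fun u v => ?_⟩
  have hc : ∀ u : SpiderVertex M K L, ∃ m, (spiderGraph M K L).Reachable u (Sum.inl m) := by
    rintro (m | ⟨m, k, l⟩)
    · exact ⟨m, Reachable.refl _⟩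
    · exact ⟨m, reach_leg_core m k l⟩
  obtain ⟨m, hm⟩ := hc u
  obtain ⟨m', hm'⟩ := hc v
  exact (hm.trans (reach_core m m')).trans hm'.symm

lemma dist_leg_core (m : Fin M) (k : Fin K) (l : Fin L) :
    (spiderGraph M K L).dist (Sum.inr (m, k, l)) (Sum.inl m) ≤ (l : ℕ) + 1 := by
  have := SimpleGraph.dist_le (legWalk m k l.1 l.2)
  rwa [legWalk_length] at this

lemma dist_leg_leg (hM : 1 ≤ M) (m : Fin M) (k : Fin K) :
    ∀ (d : ℕ) (a b : Fin L), (a : ℕ) + d = (b : ℕ) →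
    (spiderGraph M K L).dist (Sum.inr (m, k, b)) (Sum.inr (m, k, a)) ≤ d := by
  intro d
  induction d with
  | zero =>
      intro a b hab
      have : a = b := Fin.ext (by omega)
      subst this
      simp [SimpleGraph.dist_self]
  | succ d ih =>
      intro a b hab
      have hc : (a : ℕ) + d < L := by have := b.isLt; omega
      set c : Fin L := ⟨(a : ℕ) + d, hc⟩ with hcdef
      have tri := (spider_connected (M := M) (K := K) (L := L) hM).dist_triangle
        (u := Sum.inr (m, k, b)) (v := Sum.inr (m, k, c))
        (w := Sum.inr (m, k, a))
      have hadj : (spiderGraph M K L).Adj (Sum.inr (m, k, b))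
          (Sum.inr (m, k, c)) := adj_rr.mpr ⟨rfl, rfl, Or.inr (by simp [hcdef]; omega)⟩
      have h1 := SimpleGraph.dist_le hadj.toWalk
      have h3 := ih a c (by simp [hcdef])
      simp only [SimpleGraph.Walk.length_cons, SimpleGraph.Walk.length_nil] at h1
      omega

end SpiderAux

namespace SpiderAux

variable {M K L : ℕ}

open SimpleGraph

lemma dist_leg_leg' (hM : 1 ≤ M) (m : Fin M) (k : Fin K) (l l' : Fin L) :
    (spiderGraph M K L).dist (Sum.inr (m, k, l)) (Sum.inr (m, k, l')) ≤ Nat.dist l l' := by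
  rcases le_total (l' : ℕ) (l : ℕ) with h | h
  · have h1 := dist_leg_leg hM m k ((l : ℕ) - l') l' l (by omega)
    have h2 : Nat.dist l l' = (l : ℕ) - l' := by simp [Nat.dist]; omega
    omega
  · have h1 := dist_leg_leg hM m k ((l' : ℕ) - l) l l' (by omega)
    rw [SimpleGraph.dist_comm] at h1
    have h2 : Nat.dist l l' = (l' : ℕ) - l := by simp [Nat.dist]; omega
    omega

lemma dist_le_D (hM : 1 ≤ M) (u v : SpiderVertex M K L) :
    (spiderGraph M K L).dist u v ≤ D u v := by
  have hconn := spider_connected (M := M) (K := K) (L := L) hM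
  have adj_dist : ∀ {a b : SpiderVertex M K L}, (spiderGraph M K L).Adj a b →
      (spiderGraph M K L).dist a b ≤ 1 := by
    intro a b h
    have := SimpleGraph.dist_le h.toWalk
    simpa using this
  rcases u with m | ⟨m, k, l⟩ <;> rcases v with m' | ⟨m', k', l'⟩
  · simp only [D]
    split_ifs with h
    · subst h; simp [SimpleGraph.dist_self]
    · exact adj_dist (adj_ll.mpr h)
  · -- core to leg
    simp only [D]
    have h1 := dist_leg_core m' k' l'
    rw [SimpleGraph.dist_comm] at h1
    split_ifs with h
    · subst h; omega
    · have tri := hconn.dist_triangle (u := Sum.inl m) (v := Sum.inl m')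
        (w := Sum.inr (m', k', l'))
      have h2 := adj_dist (adj_ll.mpr h)
      omega
  · simp only [D]
    have h1 := dist_leg_core m k l
    split_ifs with h
    · subst h; omega
    · have tri := hconn.dist_triangle (u := Sum.inr (m, k, l)) (v := Sum.inl m)
        (w := Sum.inl m')
      have h2 := adj_dist (adj_ll.mpr (fun hh => h hh.symm))
      omega
  · simp only [D]
    have h1 := dist_leg_core m k l
    have h2 := dist_leg_core m' k' l'
    rw [SimpleGraph.dist_comm] at h2
    split_ifs with h hk
    · subst h; subst hk; exact dist_leg_leg' hM m k l l'
    · subst h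
      have tri1 := hconn.dist_triangle (u := Sum.inr (m, k, l)) (v := Sum.inl m)
        (w := Sum.inr (m, k', l'))
      omega
    · have tri1 := hconn.dist_triangle (u := Sum.inr (m, k, l)) (v := Sum.inl m)
        (w := Sum.inr (m', k', l'))
      have tri2 := hconn.dist_triangle (u := Sum.inl m) (v := Sum.inl m')
        (w := Sum.inr (m', k', l'))
      have h3 := adj_dist (adj_ll.mpr h)
      omega

lemma D_le_walk : ∀ {u v : SpiderVertex M K L} (w : (spiderGraph M K L).Walk u v),
    D u v ≤ w.length := by
  intro u v w
  induction w with
  | nil => simp [D_self]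
  | @cons a b c h p ih =>
      have := D_lipschitz h c
      simp only [SimpleGraph.Walk.length_cons]
      omega

lemma dist_eq_D (hM : 1 ≤ M) (u v : SpiderVertex M K L) :
    (spiderGraph M K L).dist u v = D u v := by
  refine le_antisymm (dist_le_D hM u v) ?_
  obtain ⟨p, hp⟩ := (spider_connected (M := M) (K := K) (L := L) hM).exists_walk_length_eq_dist u v
  rw [← hp]
  exact D_le_walk p

lemma D_le_max (hL : 1 ≤ L) (u v : SpiderVertex M K L) : D u v ≤ 2 * L + 1 := by
  rcases u with m | ⟨m, k, l⟩ <;> rcases v with m' | ⟨m', k', l'⟩ <;>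
    simp only [D] <;> split_ifs <;> simp [Nat.dist] <;>
    first
    | omega
    | (have := l.isLt; omega)
    | (have := l.isLt; have := l'.isLt; omega)
    | (have := l'.isLt; omega)

end SpiderAux

namespace SpiderAux

variable {M K L : ℕ}

open SimpleGraph Finset

/-- Auxiliary graph whose edges are the pairs at distance `2L+1`. -/
def maxGraph (M K L : ℕ) : SimpleGraph (SpiderVertex M K L) where
  Adj u v := D u v = 2 * L + 1
  symm := ⟨fun u v h => by change D u v = 2 * L + 1 at h; rwa [D_comm] at h⟩
  loopless := ⟨fun u h => by change D u u = 2 * L + 1 at h; rw [D_self] at h; omega⟩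

instance : DecidableRel (maxGraph M K L).Adj :=
  fun u v => inferInstanceAs (Decidable (D u v = 2 * L + 1))

lemma maxGraph_adj {u v : SpiderVertex M K L} :
    (maxGraph M K L).Adj u v ↔ D u v = 2 * L + 1 := Iff.rfl

lemma degree_inl (hL : 1 ≤ L) (m : Fin M) :
    (maxGraph M K L).degree (Sum.inl m) = 0 := by
  rw [← card_neighborFinset_eq_degree, Finset.card_eq_zero, neighborFinset_eq_filter,
    Finset.filter_eq_empty_iff]
  rintro (m' | ⟨m', k', l'⟩) -
  · rw [maxGraph_adj]; simp only [D]; split_ifs <;> first | exact not_false | omega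
  · rw [maxGraph_adj]; simp only [D]; split_ifs <;>
      first | exact not_false | (have := l'.isLt; omega)

lemma degree_inr (hL : 1 ≤ L) (m : Fin M) (k : Fin K) (l : Fin L) :
    (maxGraph M K L).degree (Sum.inr (m, k, l)) =
      if (l : ℕ) = L - 1 then (M - 1) * K else 0 := by
  split_ifs with hl
  · -- neighbor finset is the image of pairs (m', k') with m' ≠ m
    rw [← card_neighborFinset_eq_degree, neighborFinset_eq_filter]
    have himg : Finset.univ.filter ((maxGraph M K L).Adj (Sum.inr (m, k, l))) =
        (Finset.univ.filter (fun p : Fin M × Fin K => p.1 ≠ m)).image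
          (fun p => (Sum.inr (p.1, p.2, ⟨L - 1, by omega⟩) : SpiderVertex M K L)) := by
      ext w
      simp only [Finset.mem_filter, Finset.mem_univ, true_and, Finset.mem_image]
      constructor
      · rintro hadj
        rcases w with m' | ⟨m', k', l'⟩
        · rw [maxGraph_adj] at hadj; simp only [D] at hadj
          split_ifs at hadj <;> omega
        · rw [maxGraph_adj] at hadj; simp only [D] at hadj
          split_ifs at hadj with h1 h2
          · exfalso; have := l.isLt; have := l'.isLt
            simp [Nat.dist] at hadj; omega
          · exfalso; have := l'.isLt; omega
          · refine ⟨(m', k'), fun h => h1 h.symm, ?_⟩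
            have hl' : l' = (⟨L - 1, by omega⟩ : Fin L) :=
              Fin.ext (by have := l'.isLt; simp; omega)
            rw [hl']
      · rintro ⟨⟨m', k'⟩, hm', rfl⟩
        rw [maxGraph_adj]; simp only [D]
        rw [if_neg (fun h => hm' h.symm)]
        simp; omega
    rw [himg, Finset.card_image_of_injective _ (by
      intro a b hab
      simp only [Sum.inr.injEq, Prod.mk.injEq] at hab
      exact Prod.ext hab.1 hab.2.1)]
    have : (Finset.univ.filter (fun p : Fin M × Fin K => p.1 ≠ m)) =
        (Finset.univ.filter (fun a : Fin M => a ≠ m)) ×ˢ Finset.univ := by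
      rw [← Finset.filter_product_left, Finset.univ_product_univ]
    rw [this, Finset.card_product, Finset.filter_ne', Finset.card_erase_of_mem (mem_univ m)]
    simp [Finset.card_univ]
  · rw [← card_neighborFinset_eq_degree, Finset.card_eq_zero, neighborFinset_eq_filter,
      Finset.filter_eq_empty_iff]
    rintro (m' | ⟨m', k', l'⟩) -
    · rw [maxGraph_adj]; simp only [D]; split_ifs <;>
        first | exact not_false | (have := l.isLt; omega)
    · rw [maxGraph_adj]; simp only [D]; split_ifs
      · have := l.isLt; have := l'.isLt
        simp [Nat.dist]; omega
      · have := l.isLt; have := l'.isLt; omega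
      · have := l.isLt; have := l'.isLt; omega

lemma card_edges (hM : 2 ≤ M) (hK : 1 ≤ K) (hL : 1 ≤ L) :
    (maxGraph M K L).edgeFinset.card = M * K ^ 2 * (M - 1) / 2 := by
  have hs := (maxGraph M K L).sum_degrees_eq_twice_card_edges
  rw [Fintype.sum_sum_type] at hs
  simp only [degree_inl hL, degree_inr hL, Finset.sum_const_zero, zero_add] at hs
  rw [Fintype.sum_prod_type] at hs
  have hone : ∀ (mm : Fin M) (kk : Fin K),
      ∑ l : Fin L, (if (l : ℕ) = L - 1 then (M - 1) * K else 0) = (M - 1) * K := by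
    intro mm kk
    rw [Finset.sum_eq_single (⟨L - 1, by omega⟩ : Fin L)]
    · simp
    · intro b _ hb
      rw [if_neg (fun h => hb (Fin.ext h))]
    · intro h; exact absurd (Finset.mem_univ _) h
  simp only [Fintype.sum_prod_type] at hs
  rw [Finset.sum_congr rfl (fun mm _ => Finset.sum_congr rfl (fun kk _ => hone mm kk))] at hs
  simp only [Finset.sum_const, Finset.card_univ, Fintype.card_fin, smul_eq_mul] at hs
  have key : M * (K * ((M - 1) * K)) = M * K ^ 2 * (M - 1) := by ring
  omega

end SpiderAux

namespace SpiderAux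

variable {M K L : ℕ}

open SimpleGraph

lemma pred_iff_mem_edgeSet (hM : 1 ≤ M) (p : Sym2 (SpiderVertex M K L)) :
    (¬ p.IsDiag ∧ ∀ u v : SpiderVertex M K L, p = s(u, v) →
      (spiderGraph M K L).dist u v = 2 * L + 1) ↔ p ∈ (maxGraph M K L).edgeSet := by
  induction p using Sym2.ind with
  | _ a b =>
    rw [SimpleGraph.mem_edgeSet, maxGraph_adj, Sym2.mk_isDiag_iff]
    constructor
    · rintro ⟨hd, hdist⟩
      rw [← dist_eq_D hM]
      exact hdist a b rfl
    · intro hD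
      have hab : a ≠ b := by
        rintro rfl
        rw [D_self] at hD; omega
      refine ⟨hab, fun u v huv => ?_⟩
      rw [Sym2.eq_iff] at huv
      rcases huv with ⟨rfl, rfl⟩ | ⟨rfl, rfl⟩
      · rw [dist_eq_D hM]; exact hD
      · rw [SimpleGraph.dist_comm, dist_eq_D hM]; exact hD

theorem spider_alpha_max' (hM : 2 ≤ M) (hK : 1 ≤ K) (hL : 1 ≤ L) :
    alphaSpider M K L (2 * L + 1) = M * K ^ 2 * (M - 1) / 2 ∧
    ∀ j : ℕ, 2 * L + 2 ≤ j → alphaSpider M K L j = 0 := by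
  have hM1 : 1 ≤ M := by omega
  constructor
  · rw [alphaSpider, Nat.card_congr (Equiv.subtypeEquivRight
      (fun p => pred_iff_mem_edgeSet hM1 p))]
    rw [Nat.card_eq_fintype_card]
    rw [← Set.toFinset_card]
    rw [show ((maxGraph M K L).edgeSet.toFinset) = (maxGraph M K L).edgeFinset from rfl]
    exact card_edges hM hK hL
  · intro j hj
    rw [alphaSpider]
    have : IsEmpty {p : Sym2 (SpiderVertex M K L) //
        ¬ p.IsDiag ∧ ∀ u v : SpiderVertex M K L, p = s(u, v) →
          (spiderGraph M K L).dist u v = j} := by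
      constructor
      rintro ⟨p, hd, hdist⟩
      induction p using Sym2.ind with
      | _ a b =>
        have h1 := hdist a b rfl
        rw [dist_eq_D hM1] at h1
        have h2 := D_le_max hL a b
        omega
    exact Nat.card_of_isEmpty

end SpiderAux


/-- For all `M ≥ 2`, `K ≥ 1`, `L ≥ 1`, the number of unordered pairs of
distinct vertices of `Sp(M,K,L)` at distance exactly `2L + 1` equals `M·K²(M−1)/2`, and
for every `j ≥ 2L + 2` there are no pairs of vertices at distance exactly `j`. -/
theorem spider_alpha_max (M K L : ℕ) (hM : 2 ≤ M) (hK : 1 ≤ K) (hL : 1 ≤ L) :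
    alphaSpider M K L (2 * L + 1) = M * K ^ 2 * (M - 1) / 2 ∧
    ∀ j : ℕ, 2 * L + 2 ≤ j → alphaSpider M K L j = 0 :=
  SpiderAux.spider_alpha_max' hM hK hL
end
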